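/- arXiv:1008.1737 — 2 statements merged into one kernel-verified Lean document; each statement's English description precedes it below -/
import Mathlib

section
/- Let k be a field of characteristic not 2 and not 3, and let R = k[s,t,u,v]/(s², sv, t², tv, u², uv, v² − st − su). Then the elements s + t + 2u − v and 3s + t − 2u + 4v form an exact pair of zero divisors in R. -/
open MvPolynomial

set_option synthInstance.maxHeartbeats 1000000
set_option maxHeartbeats 1000000

universe u

@[ext]
structure A8 (k : Type u) where
  c0 : k
  c1 : k
  c2 : k
  c3 : k
  c4 : k
  c5 : k
  c6 : k
  c7 : k

namespace A8

variable {k : Type u} [CommRing k]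

instance : Zero (A8 k) := ⟨⟨0,0,0,0,0,0,0,0⟩⟩
instance : One (A8 k) := ⟨⟨1,0,0,0,0,0,0,0⟩⟩
instance : Add (A8 k) :=
  ⟨fun a b => ⟨a.c0+b.c0, a.c1+b.c1, a.c2+b.c2, a.c3+b.c3, a.c4+b.c4, a.c5+b.c5, a.c6+b.c6, a.c7+b.c7⟩⟩
instance : Neg (A8 k) :=
  ⟨fun a => ⟨-a.c0, -a.c1, -a.c2, -a.c3, -a.c4, -a.c5, -a.c6, -a.c7⟩⟩
instance : Mul (A8 k) :=
  ⟨fun a b =>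
    ⟨a.c0*b.c0,
     a.c0*b.c1 + a.c1*b.c0,
     a.c0*b.c2 + a.c2*b.c0,
     a.c0*b.c3 + a.c3*b.c0,
     a.c0*b.c4 + a.c4*b.c0,
     a.c0*b.c5 + a.c5*b.c0 + a.c1*b.c2 + a.c2*b.c1 + a.c4*b.c4,
     a.c0*b.c6 + a.c6*b.c0 + a.c1*b.c3 + a.c3*b.c1 + a.c4*b.c4,
     a.c0*b.c7 + a.c7*b.c0 + a.c2*b.c3 + a.c3*b.c2⟩⟩

@[simp] lemma zero_c0 : (0 : A8 k).c0 = 0 := rfl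
@[simp] lemma zero_c1 : (0 : A8 k).c1 = 0 := rfl
@[simp] lemma zero_c2 : (0 : A8 k).c2 = 0 := rfl
@[simp] lemma zero_c3 : (0 : A8 k).c3 = 0 := rfl
@[simp] lemma zero_c4 : (0 : A8 k).c4 = 0 := rfl
@[simp] lemma zero_c5 : (0 : A8 k).c5 = 0 := rfl
@[simp] lemma zero_c6 : (0 : A8 k).c6 = 0 := rfl
@[simp] lemma zero_c7 : (0 : A8 k).c7 = 0 := rfl

@[simp] lemma one_c0 : (1 : A8 k).c0 = 1 := rfl
@[simp] lemma one_c1 : (1 : A8 k).c1 = 0 := rfl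
@[simp] lemma one_c2 : (1 : A8 k).c2 = 0 := rfl
@[simp] lemma one_c3 : (1 : A8 k).c3 = 0 := rfl
@[simp] lemma one_c4 : (1 : A8 k).c4 = 0 := rfl
@[simp] lemma one_c5 : (1 : A8 k).c5 = 0 := rfl
@[simp] lemma one_c6 : (1 : A8 k).c6 = 0 := rfl
@[simp] lemma one_c7 : (1 : A8 k).c7 = 0 := rfl

@[simp] lemma add_c0 (a b : A8 k) : (a+b).c0 = a.c0 + b.c0 := rfl
@[simp] lemma add_c1 (a b : A8 k) : (a+b).c1 = a.c1 + b.c1 := rfl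
@[simp] lemma add_c2 (a b : A8 k) : (a+b).c2 = a.c2 + b.c2 := rfl
@[simp] lemma add_c3 (a b : A8 k) : (a+b).c3 = a.c3 + b.c3 := rfl
@[simp] lemma add_c4 (a b : A8 k) : (a+b).c4 = a.c4 + b.c4 := rfl
@[simp] lemma add_c5 (a b : A8 k) : (a+b).c5 = a.c5 + b.c5 := rfl
@[simp] lemma add_c6 (a b : A8 k) : (a+b).c6 = a.c6 + b.c6 := rfl
@[simp] lemma add_c7 (a b : A8 k) : (a+b).c7 = a.c7 + b.c7 := rfl

@[simp] lemma neg_c0 (a : A8 k) : (-a).c0 = -a.c0 := rfl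
@[simp] lemma neg_c1 (a : A8 k) : (-a).c1 = -a.c1 := rfl
@[simp] lemma neg_c2 (a : A8 k) : (-a).c2 = -a.c2 := rfl
@[simp] lemma neg_c3 (a : A8 k) : (-a).c3 = -a.c3 := rfl
@[simp] lemma neg_c4 (a : A8 k) : (-a).c4 = -a.c4 := rfl
@[simp] lemma neg_c5 (a : A8 k) : (-a).c5 = -a.c5 := rfl
@[simp] lemma neg_c6 (a : A8 k) : (-a).c6 = -a.c6 := rfl
@[simp] lemma neg_c7 (a : A8 k) : (-a).c7 = -a.c7 := rfl


@[simp] lemma mul_c0 (a b : A8 k) : (a*b).c0 = a.c0*b.c0 := rfl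
@[simp] lemma mul_c1 (a b : A8 k) : (a*b).c1 = a.c0*b.c1 + a.c1*b.c0 := rfl
@[simp] lemma mul_c2 (a b : A8 k) : (a*b).c2 = a.c0*b.c2 + a.c2*b.c0 := rfl
@[simp] lemma mul_c3 (a b : A8 k) : (a*b).c3 = a.c0*b.c3 + a.c3*b.c0 := rfl
@[simp] lemma mul_c4 (a b : A8 k) : (a*b).c4 = a.c0*b.c4 + a.c4*b.c0 := rfl
@[simp] lemma mul_c5 (a b : A8 k) :
    (a*b).c5 = a.c0*b.c5 + a.c5*b.c0 + a.c1*b.c2 + a.c2*b.c1 + a.c4*b.c4 := rfl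
@[simp] lemma mul_c6 (a b : A8 k) :
    (a*b).c6 = a.c0*b.c6 + a.c6*b.c0 + a.c1*b.c3 + a.c3*b.c1 + a.c4*b.c4 := rfl
@[simp] lemma mul_c7 (a b : A8 k) :
    (a*b).c7 = a.c0*b.c7 + a.c7*b.c0 + a.c2*b.c3 + a.c3*b.c2 := rfl

instance : CommRing (A8 k) where
  add_assoc a b c := by ext <;> simp <;> ring
  zero_add a := by ext <;> simp
  add_zero a := by ext <;> simp
  add_comm a b := by ext <;> simp <;> ring
  neg_add_cancel a := by ext <;> simp
  mul_assoc a b c := by ext <;> simp <;> ring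
  one_mul a := by ext <;> simp
  mul_one a := by ext <;> simp
  left_distrib a b c := by ext <;> simp <;> ring
  right_distrib a b c := by ext <;> simp <;> ring
  zero_mul a := by ext <;> simp
  mul_zero a := by ext <;> simp
  mul_comm a b := by ext <;> simp <;> ring
  nsmul := nsmulRec
  zsmul := zsmulRec

@[simp] lemma sub_c0 (a b : A8 k) : (a-b).c0 = a.c0 - b.c0 := by rw [sub_eq_add_neg, sub_eq_add_neg (a.c0)]; rfl
@[simp] lemma sub_c1 (a b : A8 k) : (a-b).c1 = a.c1 - b.c1 := by rw [sub_eq_add_neg, sub_eq_add_neg (a.c1)]; rfl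
@[simp] lemma sub_c2 (a b : A8 k) : (a-b).c2 = a.c2 - b.c2 := by rw [sub_eq_add_neg, sub_eq_add_neg (a.c2)]; rfl
@[simp] lemma sub_c3 (a b : A8 k) : (a-b).c3 = a.c3 - b.c3 := by rw [sub_eq_add_neg, sub_eq_add_neg (a.c3)]; rfl
@[simp] lemma sub_c4 (a b : A8 k) : (a-b).c4 = a.c4 - b.c4 := by rw [sub_eq_add_neg, sub_eq_add_neg (a.c4)]; rfl
@[simp] lemma sub_c5 (a b : A8 k) : (a-b).c5 = a.c5 - b.c5 := by rw [sub_eq_add_neg, sub_eq_add_neg (a.c5)]; rfl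
@[simp] lemma sub_c6 (a b : A8 k) : (a-b).c6 = a.c6 - b.c6 := by rw [sub_eq_add_neg, sub_eq_add_neg (a.c6)]; rfl
@[simp] lemma sub_c7 (a b : A8 k) : (a-b).c7 = a.c7 - b.c7 := by rw [sub_eq_add_neg, sub_eq_add_neg (a.c7)]; rfl

/-- The structure map `k → A8 k`. -/
def C8 : k →+* A8 k where
  toFun c := ⟨c,0,0,0,0,0,0,0⟩
  map_one' := by ext <;> simp
  map_mul' a b := by ext <;> simp
  map_zero' := by ext <;> simp
  map_add' a b := by ext <;> simp

instance : Algebra k (A8 k) := (C8 (k := k)).toAlgebra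

@[simp] lemma algebraMap_c0 (c : k) : (algebraMap k (A8 k) c).c0 = c := rfl
@[simp] lemma algebraMap_c1 (c : k) : (algebraMap k (A8 k) c).c1 = 0 := rfl
@[simp] lemma algebraMap_c2 (c : k) : (algebraMap k (A8 k) c).c2 = 0 := rfl
@[simp] lemma algebraMap_c3 (c : k) : (algebraMap k (A8 k) c).c3 = 0 := rfl
@[simp] lemma algebraMap_c4 (c : k) : (algebraMap k (A8 k) c).c4 = 0 := rfl
@[simp] lemma algebraMap_c5 (c : k) : (algebraMap k (A8 k) c).c5 = 0 := rfl
@[simp] lemma algebraMap_c6 (c : k) : (algebraMap k (A8 k) c).c6 = 0 := rfl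
@[simp] lemma algebraMap_c7 (c : k) : (algebraMap k (A8 k) c).c7 = 0 := rfl

end A8


/-- The defining ideal of `R = k[s,t,u,v]/(s², sv, t², tv, u², uv, v² - st - su)`,
with `s = X 0`, `t = X 1`, `u = X 2`, `v = X 3`. -/
noncomputable def I14 (k : Type u) [CommRing k] : Ideal (MvPolynomial (Fin 4) k) :=
  Ideal.span {X 0 ^ 2, X 0 * X 3, X 1 ^ 2, X 1 * X 3, X 2 ^ 2, X 2 * X 3,
    X 3 ^ 2 - X 0 * X 1 - X 0 * X 2}

namespace Stmt14Aux

variable {k : Type u} [CommRing k]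

lemma mem1 : (X 0 ^ 2 : MvPolynomial (Fin 4) k) ∈ I14 k := Ideal.subset_span (by simp)
lemma mem2 : (X 0 * X 3 : MvPolynomial (Fin 4) k) ∈ I14 k := Ideal.subset_span (by simp)
lemma mem3 : (X 1 ^ 2 : MvPolynomial (Fin 4) k) ∈ I14 k := Ideal.subset_span (by simp)
lemma mem4 : (X 1 * X 3 : MvPolynomial (Fin 4) k) ∈ I14 k := Ideal.subset_span (by simp)
lemma mem5 : (X 2 ^ 2 : MvPolynomial (Fin 4) k) ∈ I14 k := Ideal.subset_span (by simp)
lemma mem6 : (X 2 * X 3 : MvPolynomial (Fin 4) k) ∈ I14 k := Ideal.subset_span (by simp)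
lemma mem7 : (X 3 ^ 2 - X 0 * X 1 - X 0 * X 2 : MvPolynomial (Fin 4) k) ∈ I14 k :=
  Ideal.subset_span (by simp)

lemma mem_stu : (X 0 * X 1 * X 2 : MvPolynomial (Fin 4) k) ∈ I14 k := by
  have h : (X 0 * X 1 * X 2 : MvPolynomial (Fin 4) k) =
      X 3 * (X 1 * X 3) - X 0 * (X 1 ^ 2) - X 1 * (X 3 ^ 2 - X 0 * X 1 - X 0 * X 2) := by
    ring
  rw [h]
  exact sub_mem (sub_mem (Ideal.mul_mem_left _ _ mem4) (Ideal.mul_mem_left _ _ mem3))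
    (Ideal.mul_mem_left _ _ mem7)

/-- Images of the four variables in `A8`. -/
def gens : Fin 4 → A8 k
  | 0 => ⟨0,1,0,0,0,0,0,0⟩
  | 1 => ⟨0,0,1,0,0,0,0,0⟩
  | 2 => ⟨0,0,0,1,0,0,0,0⟩
  | 3 => ⟨0,0,0,0,1,0,0,0⟩

/-- Evaluation map. -/
noncomputable def phi : MvPolynomial (Fin 4) k →ₐ[k] A8 k := aeval gens

/-- Linear section `A8 → MvPolynomial`. -/
noncomputable def sig (y : A8 k) : MvPolynomial (Fin 4) k :=
  C y.c0 + C y.c1 * X 0 + C y.c2 * X 1 + C y.c3 * X 2 + C y.c4 * X 3 +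
    C y.c5 * (X 0 * X 1) + C y.c6 * (X 0 * X 2) + C y.c7 * (X 1 * X 2)

lemma sig_zero : sig (0 : A8 k) = 0 := by simp [sig]

lemma sig_add (y z : A8 k) : sig (y + z) = sig y + sig z := by
  simp only [sig, A8.add_c0, A8.add_c1, A8.add_c2, A8.add_c3, A8.add_c4, A8.add_c5,
    A8.add_c6, A8.add_c7, map_add]
  ring

/-- Key step: multiplying a normal form by a variable stays congruent mod `I14`. -/
lemma key (i : Fin 4) (y : A8 k) : sig y * X i - sig (y * gens i) ∈ I14 k := by
  fin_cases i
  · show sig y * X 0 - sig (y * gens 0) ∈ I14 k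
    have h : sig y * X 0 - sig (y * gens (0 : Fin 4)) =
        (C y.c1) * (X 0 ^ 2) + (C y.c4) * (X 0 * X 3) + (C y.c5 * X 1) * (X 0 ^ 2) +
          (C y.c6 * X 2) * (X 0 ^ 2) + (C y.c7) * (X 0 * X 1 * X 2) := by
      simp only [sig, gens, A8.mul_c0, A8.mul_c1, A8.mul_c2, A8.mul_c3, A8.mul_c4, A8.mul_c5,
        A8.mul_c6, A8.mul_c7]
      simp only [mul_zero, zero_mul, add_zero, zero_add, mul_one, one_mul, C_0]
      ring
    rw [h]
    exact add_mem (add_mem (add_mem (add_mem (Ideal.mul_mem_left _ _ mem1)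
      (Ideal.mul_mem_left _ _ mem2)) (Ideal.mul_mem_left _ _ mem1))
      (Ideal.mul_mem_left _ _ mem1)) (Ideal.mul_mem_left _ _ mem_stu)
  · show sig y * X 1 - sig (y * gens 1) ∈ I14 k
    have h : sig y * X 1 - sig (y * gens (1 : Fin 4)) =
        (C y.c2) * (X 1 ^ 2) + (C y.c4) * (X 1 * X 3) + (C y.c5 * X 0) * (X 1 ^ 2) +
          (C y.c6) * (X 0 * X 1 * X 2) + (C y.c7 * X 2) * (X 1 ^ 2) := by
      simp only [sig, gens, A8.mul_c0, A8.mul_c1, A8.mul_c2, A8.mul_c3, A8.mul_c4, A8.mul_c5,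
        A8.mul_c6, A8.mul_c7]
      simp only [mul_zero, zero_mul, add_zero, zero_add, mul_one, one_mul, C_0]
      ring
    rw [h]
    exact add_mem (add_mem (add_mem (add_mem (Ideal.mul_mem_left _ _ mem3)
      (Ideal.mul_mem_left _ _ mem4)) (Ideal.mul_mem_left _ _ mem3))
      (Ideal.mul_mem_left _ _ mem_stu)) (Ideal.mul_mem_left _ _ mem3)
  · show sig y * X 2 - sig (y * gens 2) ∈ I14 k
    have h : sig y * X 2 - sig (y * gens (2 : Fin 4)) =
        (C y.c3) * (X 2 ^ 2) + (C y.c4) * (X 2 * X 3) + (C y.c5) * (X 0 * X 1 * X 2) +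
          (C y.c6 * X 0) * (X 2 ^ 2) + (C y.c7 * X 1) * (X 2 ^ 2) := by
      simp only [sig, gens, A8.mul_c0, A8.mul_c1, A8.mul_c2, A8.mul_c3, A8.mul_c4, A8.mul_c5,
        A8.mul_c6, A8.mul_c7]
      simp only [mul_zero, zero_mul, add_zero, zero_add, mul_one, one_mul, C_0]
      ring
    rw [h]
    exact add_mem (add_mem (add_mem (add_mem (Ideal.mul_mem_left _ _ mem5)
      (Ideal.mul_mem_left _ _ mem6)) (Ideal.mul_mem_left _ _ mem_stu))
      (Ideal.mul_mem_left _ _ mem5)) (Ideal.mul_mem_left _ _ mem5)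
  · show sig y * X 3 - sig (y * gens 3) ∈ I14 k
    have h : sig y * X 3 - sig (y * gens (3 : Fin 4)) =
        (C y.c1) * (X 0 * X 3) + (C y.c2) * (X 1 * X 3) + (C y.c3) * (X 2 * X 3) +
          (C y.c4) * (X 3 ^ 2 - X 0 * X 1 - X 0 * X 2) +
          (C y.c5 * X 0) * (X 1 * X 3) + (C y.c6 * X 0) * (X 2 * X 3) +
          (C y.c7 * X 1) * (X 2 * X 3) := by
      simp only [sig, gens, A8.mul_c0, A8.mul_c1, A8.mul_c2, A8.mul_c3, A8.mul_c4, A8.mul_c5,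
        A8.mul_c6, A8.mul_c7]
      simp only [mul_zero, zero_mul, add_zero, zero_add, mul_one, one_mul, C_0]
      ring
    rw [h]
    exact add_mem (add_mem (add_mem (add_mem (add_mem (add_mem
      (Ideal.mul_mem_left _ _ mem2) (Ideal.mul_mem_left _ _ mem4))
      (Ideal.mul_mem_left _ _ mem6)) (Ideal.mul_mem_left _ _ mem7))
      (Ideal.mul_mem_left _ _ mem4)) (Ideal.mul_mem_left _ _ mem6))
      (Ideal.mul_mem_left _ _ mem6)

/-- Every polynomial is congruent to the normal form of its `phi`-image. -/
lemma sub_sig_mem (p : MvPolynomial (Fin 4) k) : p - sig (phi p) ∈ I14 k := by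
  induction p using MvPolynomial.induction_on with
  | C a =>
      have : (C a : MvPolynomial (Fin 4) k) - sig (phi (C a)) = 0 := by
        simp [phi, sig]
      rw [this]; exact zero_mem _
  | add p q hp hq =>
      have h : p + q - sig (phi (p + q)) = (p - sig (phi p)) + (q - sig (phi q)) := by
        rw [map_add, sig_add]; ring
      rw [h]; exact add_mem hp hq
  | mul_X p i hp =>
      have h : p * X i - sig (phi (p * X i)) =
          (p - sig (phi p)) * X i + (sig (phi p) * X i - sig (phi p * gens i)) := by
        rw [map_mul]
        have : phi (X i : MvPolynomial (Fin 4) k) = gens i := aeval_X _ _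
        rw [this]; ring
      rw [h]
      exact add_mem (Ideal.mul_mem_right _ _ hp) (key i _)

lemma I_le_ker : ∀ p ∈ I14 k, phi (k := k) p = 0 := by
  intro p hp
  have hle : I14 k ≤ RingHom.ker (phi (k := k)).toRingHom := by
    rw [I14, Ideal.span_le]
    rintro g hg
    simp only [Set.mem_insert_iff, Set.mem_singleton_iff] at hg
    rcases hg with rfl | rfl | rfl | rfl | rfl | rfl | rfl <;>
      · show phi _ = 0
        simp only [phi, map_sub, map_mul, map_pow, aeval_X]
        ext <;> simp [gens, pow_two, sub_eq_add_neg]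
  exact hle hp

lemma mem_I_iff (p : MvPolynomial (Fin 4) k) : p ∈ I14 k ↔ phi p = 0 := by
  constructor
  · exact I_le_ker p
  · intro h
    have := sub_sig_mem p
    rwa [h, sig_zero, sub_zero] at this



lemma two_C : (2 : MvPolynomial (Fin 4) k) = C (2:k) := (map_ofNat (C : k →+* _) 2).symm
lemma three_C : (3 : MvPolynomial (Fin 4) k) = C (3:k) := (map_ofNat (C : k →+* _) 3).symm
lemma four_C : (4 : MvPolynomial (Fin 4) k) = C (4:k) := (map_ofNat (C : k →+* _) 4).symm

lemma phia : phi (X 0 + X 1 + 2 * X 2 - X 3 : MvPolynomial (Fin 4) k) =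
    (⟨0,1,1,2,-1,0,0,0⟩ : A8 k) := by
  rw [two_C]
  simp only [phi, map_add, map_sub, map_mul, aeval_X, aeval_C]
  ext <;> simp [gens, sub_eq_add_neg]

lemma phib : phi (3 * X 0 + X 1 - 2 * X 2 + 4 * X 3 : MvPolynomial (Fin 4) k) =
    (⟨0,3,1,-2,4,0,0,0⟩ : A8 k) := by
  rw [two_C, three_C, four_C]
  simp only [phi, map_add, map_sub, map_mul, aeval_X, aeval_C]
  ext <;> simp [gens, sub_eq_add_neg]

end Stmt14Aux


/-- The ring `R = k[s,t,u,v]/(s², sv, t², tv, u², uv, v² - st - su)`. -/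
abbrev R14 (k : Type u) [CommRing k] : Type u := MvPolynomial (Fin 4) k ⧸ I14 k

/-- The annihilator of an element of `R` as an ideal. -/
def annIdeal (R : Type u) [CommRing R] (a : R) : Ideal R :=
  LinearMap.ker (LinearMap.mulLeft R a)

open Stmt14Aux in
/-- over a field `k` of characteristic different from 2 and 3,
the elements `s + t + 2u - v` and `3s + t - 2u + 4v` form an exact pair of
zero divisors in `R = k[s,t,u,v]/(s², sv, t², tv, u², uv, v² - st - su)`. -/
theorem stmt14 (k : Type u) [Field k] (h2 : (2 : k) ≠ 0) (h3 : (3 : k) ≠ 0) :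
    annIdeal (R14 k) (Ideal.Quotient.mk _ (X 0 + X 1 + 2 * X 2 - X 3)) =
      Ideal.span {Ideal.Quotient.mk _ (3 * X 0 + X 1 - 2 * X 2 + 4 * X 3)} ∧
    annIdeal (R14 k) (Ideal.Quotient.mk _ (3 * X 0 + X 1 - 2 * X 2 + 4 * X 3)) =
      Ideal.span {Ideal.Quotient.mk _ (X 0 + X 1 + 2 * X 2 - X 3)} := by
  have h4 : (4 : k) ≠ 0 := by
    have := mul_ne_zero h2 h2
    norm_num at this ⊢
    exact this
  have h6 : (6 : k) ≠ 0 := by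
    have := mul_ne_zero h2 h3
    norm_num at this ⊢
    exact this
  have h12 : (12 : k) ≠ 0 := by
    have := mul_ne_zero h4 h3
    norm_num at this ⊢
    exact this
  set a : MvPolynomial (Fin 4) k := X 0 + X 1 + 2 * X 2 - X 3 with ha
  set b : MvPolynomial (Fin 4) k := 3 * X 0 + X 1 - 2 * X 2 + 4 * X 3 with hb
  have hab : a * b ∈ I14 k := by
    rw [mem_I_iff, map_mul, phia, phib]
    ext <;> simp <;> ring
  constructor
  · apply le_antisymm
    · intro x hx
      obtain ⟨p, rfl⟩ := Ideal.Quotient.mk_surjective x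
      rw [annIdeal, LinearMap.mem_ker, LinearMap.mulLeft_apply] at hx
      have hx' : a * p ∈ I14 k := by
        rw [← Ideal.Quotient.eq_zero_iff_mem, map_mul]
        exact hx
      have h0 : (⟨0,1,1,2,-1,0,0,0⟩ : A8 k) * phi p = 0 := by
        rw [← phia, ← map_mul]
        exact I_le_ker _ hx'
      set y := phi p with hy
      have e1 : y.c0 = 0 := by
        have := congrArg A8.c1 h0
        simpa using this
      have e5 := congrArg A8.c5 h0
      have e6 := congrArg A8.c6 h0
      have e7 := congrArg A8.c7 h0
      simp only [A8.mul_c5, A8.mul_c6, A8.mul_c7, A8.zero_c5, A8.zero_c6, A8.zero_c7] at e5 e6 e7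
      set q : MvPolynomial (Fin 4) k :=
        C y.c2 + C ((2*y.c5 - y.c6 + 3*y.c7)/4) * X 0 +
          C ((2*y.c5 + y.c6 - 3*y.c7)/12) * X 1 + C ((2*y.c5 + y.c6 + 3*y.c7)/6) * X 2 with hqdef
      have hphiq : phi q = (⟨y.c2, (2*y.c5 - y.c6 + 3*y.c7)/4, (2*y.c5 + y.c6 - 3*y.c7)/12,
          (2*y.c5 + y.c6 + 3*y.c7)/6, 0, 0, 0, 0⟩ : A8 k) := by
        rw [hqdef]
        simp only [phi, map_add, map_mul, aeval_X, aeval_C]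
        ext <;> simp [gens]
      have hmem : p - q * b ∈ I14 k := by
        rw [mem_I_iff, map_sub, map_mul, hphiq, phib, ← hy]
        ext
        case c0 => simp only [A8.sub_c0, A8.mul_c0, A8.zero_c0]; simpa using e1
        case c1 => simp only [A8.sub_c1, A8.mul_c1, A8.zero_c1]; linear_combination e6 - e5 - e7
        case c2 => simp
        case c3 => simp only [A8.sub_c3, A8.mul_c3, A8.zero_c3]; linear_combination e7
        case c4 => simp only [A8.sub_c4, A8.mul_c4, A8.zero_c4]; linear_combination e6 - 2*e5 - e7
        case c5 =>
          simp only [A8.sub_c5, A8.mul_c5, A8.zero_c5]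
          field_simp
          ring
        case c6 =>
          simp only [A8.sub_c6, A8.mul_c6, A8.zero_c6]
          field_simp
          ring
        case c7 =>
          simp only [A8.sub_c7, A8.mul_c7, A8.zero_c7]
          field_simp
          ring
      refine Ideal.mem_span_singleton'.mpr ⟨Ideal.Quotient.mk _ q, ?_⟩
      rw [← map_mul, Ideal.Quotient.mk_eq_mk_iff_sub_mem]
      simpa using neg_mem hmem
    · rw [Ideal.span_le]
      rintro z hz
      simp only [Set.mem_singleton_iff] at hz
      subst hz
      show _ ∈ annIdeal _ _
      rw [annIdeal, LinearMap.mem_ker, LinearMap.mulLeft_apply, ← map_mul,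
        Ideal.Quotient.eq_zero_iff_mem]
      exact hab
  · apply le_antisymm
    · intro x hx
      obtain ⟨p, rfl⟩ := Ideal.Quotient.mk_surjective x
      rw [annIdeal, LinearMap.mem_ker, LinearMap.mulLeft_apply] at hx
      have hx' : b * p ∈ I14 k := by
        rw [← Ideal.Quotient.eq_zero_iff_mem, map_mul]
        exact hx
      have h0 : (⟨0,3,1,-2,4,0,0,0⟩ : A8 k) * phi p = 0 := by
        rw [← phib, ← map_mul]
        exact I_le_ker _ hx'
      set y := phi p with hy
      have e1 : y.c0 = 0 := by
        have := congrArg A8.c2 h0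
        simpa using this
      have e5 := congrArg A8.c5 h0
      have e6 := congrArg A8.c6 h0
      have e7 := congrArg A8.c7 h0
      simp only [A8.mul_c5, A8.mul_c6, A8.mul_c7, A8.zero_c5, A8.zero_c6, A8.zero_c7] at e5 e6 e7
      set q : MvPolynomial (Fin 4) k :=
        C y.c2 + C ((2*y.c5 + y.c6 - y.c7)/4) * X 0 +
          C ((2*y.c5 - y.c6 + y.c7)/4) * X 1 + C ((-2*y.c5 + y.c6 + y.c7)/2) * X 2 with hqdef
      have hphiq : phi q = (⟨y.c2, (2*y.c5 + y.c6 - y.c7)/4, (2*y.c5 - y.c6 + y.c7)/4,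
          (-2*y.c5 + y.c6 + y.c7)/2, 0, 0, 0, 0⟩ : A8 k) := by
        rw [hqdef]
        simp only [phi, map_add, map_mul, aeval_X, aeval_C]
        ext <;> simp [gens]
      have hE1 : y.c1 = y.c2 := by
        have h := mul_eq_zero.mp (show (12:k) * (y.c1 - y.c2) = 0 by
          linear_combination 4*e5 - 4*e6 + 12*e7)
        rcases h with h | h
        · exact absurd h h12
        · linear_combination h
      have hE4 : y.c4 = -y.c2 := by
        have h := mul_eq_zero.mp (show (12:k) * (y.c4 + y.c2) = 0 by
          linear_combination 2*e5 + e6 - 3*e7)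
        rcases h with h | h
        · exact absurd h h12
        · linear_combination h
      have hmem : p - q * a ∈ I14 k := by
        rw [mem_I_iff, map_sub, map_mul, hphiq, phia, ← hy]
        ext
        case c0 => simp only [A8.sub_c0, A8.mul_c0, A8.zero_c0]; simpa using e1
        case c1 => simp only [A8.sub_c1, A8.mul_c1, A8.zero_c1]; linear_combination hE1
        case c2 => simp
        case c3 => simp only [A8.sub_c3, A8.mul_c3, A8.zero_c3]; linear_combination e7
        case c4 => simp only [A8.sub_c4, A8.mul_c4, A8.zero_c4]; linear_combination hE4
        case c5 =>
          simp only [A8.sub_c5, A8.mul_c5, A8.zero_c5]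
          field_simp
          ring
        case c6 =>
          simp only [A8.sub_c6, A8.mul_c6, A8.zero_c6]
          field_simp
          ring
        case c7 =>
          simp only [A8.sub_c7, A8.mul_c7, A8.zero_c7]
          field_simp
          ring
      refine Ideal.mem_span_singleton'.mpr ⟨Ideal.Quotient.mk _ q, ?_⟩
      rw [← map_mul, Ideal.Quotient.mk_eq_mk_iff_sub_mem]
      simpa using neg_mem hmem
    · rw [Ideal.span_le]
      rintro z hz
      simp only [Set.mem_singleton_iff] at hz
      subst hz
      show _ ∈ annIdeal _ _
      rw [annIdeal, LinearMap.mem_ker, LinearMap.mulLeft_apply, ← map_mul,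
        Ideal.Quotient.eq_zero_iff_mem]
      rw [mul_comm] at hab
      exact hab
end

section
/- Let k = F_2 or k = F_3 (the field with 2 or 3 elements) and let R = k[s,t,u,v]/(s², sv, t², tv, u², uv, v² − st − su). Then there are no exact zero divisors in R. -/
open MvPolynomial

set_option synthInstance.maxHeartbeats 1000000
set_option maxHeartbeats 1000000

/-- `x` is an exact zero divisor. -/
def IsExactZeroDivisor (R : Type u) [CommRing R] (x : R) : Prop :=
  x ≠ 0 ∧ ¬ IsUnit x ∧
    ∃ w, annIdeal R x = Ideal.span {w} ∧ annIdeal R w = Ideal.span {x}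

/-- Concrete model of the ring: coefficients w.r.t. basis 1, s, t, u, v, st, su, tu. -/
@[ext] structure CC (k : Type) where
  c0 : k
  c1 : k
  c2 : k
  c3 : k
  c4 : k
  c5 : k
  c6 : k
  c7 : k

namespace CC
variable {k : Type} [CommRing k]

instance : Add (CC k) :=
  ⟨fun x y => ⟨x.c0 + y.c0, x.c1 + y.c1, x.c2 + y.c2, x.c3 + y.c3, x.c4 + y.c4,
    x.c5 + y.c5, x.c6 + y.c6, x.c7 + y.c7⟩⟩
instance : Neg (CC k) :=
  ⟨fun x => ⟨-x.c0, -x.c1, -x.c2, -x.c3, -x.c4, -x.c5, -x.c6, -x.c7⟩⟩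
instance : Zero (CC k) := ⟨⟨0,0,0,0,0,0,0,0⟩⟩
instance : One (CC k) := ⟨⟨1,0,0,0,0,0,0,0⟩⟩
instance : Mul (CC k) :=
  ⟨fun x y =>
    ⟨x.c0 * y.c0,
     x.c0 * y.c1 + x.c1 * y.c0,
     x.c0 * y.c2 + x.c2 * y.c0,
     x.c0 * y.c3 + x.c3 * y.c0,
     x.c0 * y.c4 + x.c4 * y.c0,
     x.c0 * y.c5 + x.c5 * y.c0 + x.c1 * y.c2 + x.c2 * y.c1 + x.c4 * y.c4,
     x.c0 * y.c6 + x.c6 * y.c0 + x.c1 * y.c3 + x.c3 * y.c1 + x.c4 * y.c4,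
     x.c0 * y.c7 + x.c7 * y.c0 + x.c2 * y.c3 + x.c3 * y.c2⟩⟩

lemma add_def (x y : CC k) : x + y =
    ⟨x.c0 + y.c0, x.c1 + y.c1, x.c2 + y.c2, x.c3 + y.c3, x.c4 + y.c4,
    x.c5 + y.c5, x.c6 + y.c6, x.c7 + y.c7⟩ := rfl
lemma neg_def (x : CC k) : -x = ⟨-x.c0, -x.c1, -x.c2, -x.c3, -x.c4, -x.c5, -x.c6, -x.c7⟩ := rfl
lemma zero_def : (0 : CC k) = ⟨0,0,0,0,0,0,0,0⟩ := rfl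
lemma one_def : (1 : CC k) = ⟨1,0,0,0,0,0,0,0⟩ := rfl
lemma mul_def (x y : CC k) : x * y =
    ⟨x.c0 * y.c0,
     x.c0 * y.c1 + x.c1 * y.c0,
     x.c0 * y.c2 + x.c2 * y.c0,
     x.c0 * y.c3 + x.c3 * y.c0,
     x.c0 * y.c4 + x.c4 * y.c0,
     x.c0 * y.c5 + x.c5 * y.c0 + x.c1 * y.c2 + x.c2 * y.c1 + x.c4 * y.c4,
     x.c0 * y.c6 + x.c6 * y.c0 + x.c1 * y.c3 + x.c3 * y.c1 + x.c4 * y.c4,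
     x.c0 * y.c7 + x.c7 * y.c0 + x.c2 * y.c3 + x.c3 * y.c2⟩ := rfl

set_option maxHeartbeats 1000000 in
instance : CommRing (CC k) where
  nsmul := nsmulRec
  zsmul := zsmulRec
  add_assoc x y z := by ext <;> simp [add_def] <;> ring
  zero_add x := by ext <;> simp [add_def, zero_def]
  add_zero x := by ext <;> simp [add_def, zero_def]
  add_comm x y := by ext <;> simp [add_def] <;> ring
  neg_add_cancel x := by ext <;> simp [add_def, neg_def, zero_def]
  mul_assoc x y z := by ext <;> simp [mul_def] <;> ring
  one_mul x := by ext <;> simp [mul_def, one_def]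
  mul_one x := by ext <;> simp [mul_def, one_def]
  left_distrib x y z := by ext <;> simp [mul_def, add_def] <;> ring
  right_distrib x y z := by ext <;> simp [mul_def, add_def] <;> ring
  zero_mul x := by ext <;> simp [mul_def, zero_def]
  mul_zero x := by ext <;> simp [mul_def, zero_def]
  mul_comm x y := by ext <;> simp [mul_def] <;> ring

lemma sub_def (x y : CC k) : x - y = x + -y := rfl

end CC


variable {k : Type} [CommRing k]

/-- constants into CC -/
def rho : k →+* CC k where
  toFun c := ⟨c,0,0,0,0,0,0,0⟩
  map_one' := rfl
  map_mul' a b := by ext <;> simp [CC.mul_def]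
  map_zero' := rfl
  map_add' a b := by ext <;> simp [CC.add_def]

def gens : Fin 4 → CC k := ![⟨0,1,0,0,0,0,0,0⟩, ⟨0,0,1,0,0,0,0,0⟩, ⟨0,0,0,1,0,0,0,0⟩, ⟨0,0,0,0,1,0,0,0⟩]

noncomputable def phi0 : MvPolynomial (Fin 4) k →+* CC k := eval₂Hom rho gens

lemma hI14 : I14 k ≤ RingHom.ker (phi0 (k := k)) := by
  rw [I14, Ideal.span_le]
  rintro q hq
  simp only [Set.mem_insert_iff, Set.mem_singleton_iff] at hq
  rcases hq with rfl|rfl|rfl|rfl|rfl|rfl|rfl <;>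
    · simp only [RingHom.mem_ker, map_pow, map_mul, map_sub, phi0, eval₂Hom_X', gens]
      ext <;> simp [CC.mul_def, CC.zero_def, CC.sub_def, CC.add_def, CC.neg_def, pow_two, Matrix.cons_val_zero,
        Matrix.cons_val_one] <;> ring

noncomputable def phi : (MvPolynomial (Fin 4) k ⧸ I14 k) →+* CC k :=
  Ideal.Quotient.lift (I14 k) phi0 (fun _ ha => hI14 ha)

/-- linear representative polynomial -/
noncomputable def Lrep (x : CC k) : MvPolynomial (Fin 4) k :=
  C x.c0 + C x.c1 * X 0 + C x.c2 * X 1 + C x.c3 * X 2 + C x.c4 * X 3 +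
    C x.c5 * (X 0 * X 1) + C x.c6 * (X 0 * X 2) + C x.c7 * (X 1 * X 2)

noncomputable def psi (x : CC k) : MvPolynomial (Fin 4) k ⧸ I14 k :=
  Ideal.Quotient.mk _ (Lrep x)

lemma phi_psi (x : CC k) : phi (psi x) = x := by
  have h : phi (psi x) = phi0 (Lrep x) := rfl
  rw [h, Lrep]
  simp only [map_add, map_mul, phi0, eval₂Hom_X', coe_eval₂Hom, eval₂_C, gens]
  ext <;>
    simp [CC.mul_def, CC.add_def, rho, Matrix.cons_val_zero, Matrix.cons_val_one,
      RingHom.coe_mk, MonoidHom.coe_mk, OneHom.coe_mk] <;> ring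

lemma g1mem : (X 0 ^ 2 : MvPolynomial (Fin 4) k) ∈ I14 k :=
  Ideal.subset_span (by simp only [Set.mem_insert_iff, Set.mem_singleton_iff]; tauto)
lemma g2mem : (X 0 * X 3 : MvPolynomial (Fin 4) k) ∈ I14 k :=
  Ideal.subset_span (by simp only [Set.mem_insert_iff, Set.mem_singleton_iff]; tauto)
lemma g3mem : (X 1 ^ 2 : MvPolynomial (Fin 4) k) ∈ I14 k :=
  Ideal.subset_span (by simp only [Set.mem_insert_iff, Set.mem_singleton_iff]; tauto)
lemma g4mem : (X 1 * X 3 : MvPolynomial (Fin 4) k) ∈ I14 k :=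
  Ideal.subset_span (by simp only [Set.mem_insert_iff, Set.mem_singleton_iff]; tauto)
lemma g5mem : (X 2 ^ 2 : MvPolynomial (Fin 4) k) ∈ I14 k :=
  Ideal.subset_span (by simp only [Set.mem_insert_iff, Set.mem_singleton_iff]; tauto)
lemma g6mem : (X 2 * X 3 : MvPolynomial (Fin 4) k) ∈ I14 k :=
  Ideal.subset_span (by simp only [Set.mem_insert_iff, Set.mem_singleton_iff]; tauto)
lemma g7mem : (X 3 ^ 2 - X 0 * X 1 - X 0 * X 2 : MvPolynomial (Fin 4) k) ∈ I14 k :=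
  Ideal.subset_span (by simp only [Set.mem_insert_iff, Set.mem_singleton_iff]; tauto)
lemma gstumem : (X 0 * X 1 * X 2 : MvPolynomial (Fin 4) k) ∈ I14 k := by
  have h : (X 0 * X 1 * X 2 : MvPolynomial (Fin 4) k) =
      X 3 * (X 1 * X 3) - X 0 * X 1 ^ 2 - X 1 * (X 3 ^ 2 - X 0 * X 1 - X 0 * X 2) := by ring
  rw [h]
  exact sub_mem (sub_mem (Ideal.mul_mem_left _ _ g4mem) (Ideal.mul_mem_left _ _ g3mem))
    (Ideal.mul_mem_left _ _ g7mem)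

lemma psi_mul_X0 (x : CC k) :
    ∃ x' : CC k, psi x' = psi x * Ideal.Quotient.mk (I14 k) (X 0) := by
  refine ⟨⟨0, x.c0, 0, 0, 0, x.c2, x.c3, 0⟩, ?_⟩
  rw [psi, psi, ← map_mul, Ideal.Quotient.eq]
  have h : Lrep (⟨0, x.c0, 0, 0, 0, x.c2, x.c3, 0⟩ : CC k) - Lrep x * X 0 =
      -(C x.c1 * (X 0 ^ 2) + C x.c4 * (X 0 * X 3) + C x.c5 * X 1 * (X 0 ^ 2) +
        C x.c6 * X 2 * (X 0 ^ 2) + C x.c7 * (X 0 * X 1 * X 2)) := by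
    rw [Lrep, Lrep]; simp only [map_zero, zero_mul, add_zero, zero_add]; ring
  rw [h]
  exact neg_mem (add_mem (add_mem (add_mem (add_mem
    (Ideal.mul_mem_left _ _ g1mem) (Ideal.mul_mem_left _ _ g2mem)) (Ideal.mul_mem_left _ _ g1mem))
    (Ideal.mul_mem_left _ _ g1mem)) (Ideal.mul_mem_left _ _ gstumem))

lemma psi_mul_X1 (x : CC k) :
    ∃ x' : CC k, psi x' = psi x * Ideal.Quotient.mk (I14 k) (X 1) := by
  refine ⟨⟨0, 0, x.c0, 0, 0, x.c1, 0, x.c3⟩, ?_⟩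
  rw [psi, psi, ← map_mul, Ideal.Quotient.eq]
  have h : Lrep (⟨0, 0, x.c0, 0, 0, x.c1, 0, x.c3⟩ : CC k) - Lrep x * X 1 =
      -(C x.c2 * (X 1 ^ 2) + C x.c4 * (X 1 * X 3) + C x.c5 * X 0 * (X 1 ^ 2) +
        C x.c6 * (X 0 * X 1 * X 2) + C x.c7 * X 2 * (X 1 ^ 2)) := by
    rw [Lrep, Lrep]; simp only [map_zero, zero_mul, add_zero, zero_add]; ring
  rw [h]
  exact neg_mem (add_mem (add_mem (add_mem (add_mem
    (Ideal.mul_mem_left _ _ g3mem) (Ideal.mul_mem_left _ _ g4mem)) (Ideal.mul_mem_left _ _ g3mem))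
    (Ideal.mul_mem_left _ _ gstumem)) (Ideal.mul_mem_left _ _ g3mem))

lemma psi_mul_X2 (x : CC k) :
    ∃ x' : CC k, psi x' = psi x * Ideal.Quotient.mk (I14 k) (X 2) := by
  refine ⟨⟨0, 0, 0, x.c0, 0, 0, x.c1, x.c2⟩, ?_⟩
  rw [psi, psi, ← map_mul, Ideal.Quotient.eq]
  have h : Lrep (⟨0, 0, 0, x.c0, 0, 0, x.c1, x.c2⟩ : CC k) - Lrep x * X 2 =
      -(C x.c3 * (X 2 ^ 2) + C x.c4 * (X 2 * X 3) + C x.c5 * (X 0 * X 1 * X 2) +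
        C x.c6 * X 0 * (X 2 ^ 2) + C x.c7 * X 1 * (X 2 ^ 2)) := by
    rw [Lrep, Lrep]; simp only [map_zero, zero_mul, add_zero, zero_add]; ring
  rw [h]
  exact neg_mem (add_mem (add_mem (add_mem (add_mem
    (Ideal.mul_mem_left _ _ g5mem) (Ideal.mul_mem_left _ _ g6mem)) (Ideal.mul_mem_left _ _ gstumem))
    (Ideal.mul_mem_left _ _ g5mem)) (Ideal.mul_mem_left _ _ g5mem))

lemma psi_mul_X3 (x : CC k) :
    ∃ x' : CC k, psi x' = psi x * Ideal.Quotient.mk (I14 k) (X 3) := by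
  refine ⟨⟨0, 0, 0, 0, x.c0, x.c4, x.c4, 0⟩, ?_⟩
  rw [psi, psi, ← map_mul, Ideal.Quotient.eq]
  have h : Lrep (⟨0, 0, 0, 0, x.c0, x.c4, x.c4, 0⟩ : CC k) - Lrep x * X 3 =
      -(C x.c1 * (X 0 * X 3) + C x.c2 * (X 1 * X 3) + C x.c3 * (X 2 * X 3) +
        C x.c4 * (X 3 ^ 2 - X 0 * X 1 - X 0 * X 2) + C x.c5 * X 0 * (X 1 * X 3) +
        C x.c6 * X 0 * (X 2 * X 3) + C x.c7 * X 1 * (X 2 * X 3)) := by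
    rw [Lrep, Lrep]; simp only [map_zero, zero_mul, add_zero, zero_add]; ring
  rw [h]
  exact neg_mem (add_mem (add_mem (add_mem (add_mem (add_mem (add_mem
    (Ideal.mul_mem_left _ _ g2mem) (Ideal.mul_mem_left _ _ g4mem)) (Ideal.mul_mem_left _ _ g6mem))
    (Ideal.mul_mem_left _ _ g7mem)) (Ideal.mul_mem_left _ _ g4mem))
    (Ideal.mul_mem_left _ _ g6mem)) (Ideal.mul_mem_left _ _ g6mem))

lemma psi_mul_X (x : CC k) (i : Fin 4) :
    ∃ x' : CC k, psi x' = psi x * Ideal.Quotient.mk (I14 k) (X i) := by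
  fin_cases i
  · exact psi_mul_X0 x
  · exact psi_mul_X1 x
  · exact psi_mul_X2 x
  · exact psi_mul_X3 x

lemma psi_surj : Function.Surjective (psi (k := k)) := by
  intro y
  obtain ⟨P, rfl⟩ := Ideal.Quotient.mk_surjective y
  induction P using MvPolynomial.induction_on with
  | C a =>
      refine ⟨⟨a, 0, 0, 0, 0, 0, 0, 0⟩, ?_⟩
      rw [psi]
      congr 1
      rw [Lrep]
      simp
  | add p q ihp ihq =>
      obtain ⟨x, hx⟩ := ihp
      obtain ⟨x', hx'⟩ := ihq
      refine ⟨x + x', ?_⟩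
      have h : psi (x + x') = psi x + psi x' := by
        rw [psi, psi, psi, ← map_add]
        congr 1
        rw [Lrep, Lrep, Lrep, CC.add_def]
        push_cast [map_add]
        ring
      rw [h, hx, hx', map_add]
  | mul_X p i ih =>
      obtain ⟨x, hx⟩ := ih
      obtain ⟨x', hx'⟩ := psi_mul_X x i
      exact ⟨x', by rw [hx', hx, map_mul]⟩

lemma phi_bij : Function.Bijective (phi (k := k)) := by
  constructor
  · intro y y' h
    obtain ⟨x, rfl⟩ := psi_surj y
    obtain ⟨x', rfl⟩ := psi_surj y'
    rw [phi_psi, phi_psi] at h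
    rw [h]
  · intro x
    exact ⟨psi x, phi_psi x⟩

noncomputable def eqv : (MvPolynomial (Fin 4) k ⧸ I14 k) ≃+* CC k :=
  RingEquiv.ofBijective phi phi_bij

lemma mem_annIdeal {R : Type} [CommRing R] {a y : R} :
    y ∈ annIdeal R a ↔ a * y = 0 := by
  simp [annIdeal, LinearMap.mem_ker, LinearMap.mulLeft_apply]

lemma transfer {R S : Type} [CommRing R] [CommRing S] (e : R ≃+* S) (x : R)
    (h : IsExactZeroDivisor R x) : IsExactZeroDivisor S (e x) := by
  obtain ⟨hx, hu, w, h1, h2⟩ := h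
  have ann_map : ∀ (a b : R), annIdeal R a = Ideal.span {b} →
      annIdeal S (e a) = Ideal.span {e b} := by
    intro a b hab
    ext y
    rw [mem_annIdeal, Ideal.mem_span_singleton]
    constructor
    · intro hy
      have : a * e.symm y = 0 := by
        apply e.injective
        simpa [map_mul] using hy
      have := Ideal.mem_span_singleton.mp (hab ▸ mem_annIdeal.mpr this)
      obtain ⟨c, hc⟩ := this
      exact ⟨e c, by rw [← map_mul, ← hc]; simp⟩
    · rintro ⟨c, rfl⟩
      have hb : b ∈ annIdeal R a := hab ▸ Ideal.mem_span_singleton_self b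
      have : a * b = 0 := mem_annIdeal.mp hb
      rw [← mul_assoc, ← map_mul, this, map_zero, zero_mul]
  refine ⟨fun h0 => hx (by apply e.injective; simpa using h0),
    fun hu' => hu ?_, e w, ann_map x w h1, ann_map w x h2⟩
  · have := hu'.map e.symm.toRingHom
    simpa using this

def Mf {k : Type} [CommRing k] (a r : Fin 4 → k) : Fin 3 → k :=
  ![a 1 * r 0 + a 0 * r 1 + a 3 * r 3, a 2 * r 0 + a 0 * r 2 + a 3 * r 3,
    a 2 * r 1 + a 1 * r 2]

abbrev Hit {k : Type} [CommRing k] (a : Fin 4 → k) : Prop :=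
  (∃ r, Mf a r = ![1,0,0]) ∧ (∃ r, Mf a r = ![0,1,0]) ∧ (∃ r, Mf a r = ![0,0,1])

namespace CC
variable {k : Type} [CommRing k]

def E5 : CC k := ⟨0,0,0,0,0,1,0,0⟩
def E6 : CC k := ⟨0,0,0,0,0,0,1,0⟩
def E7 : CC k := ⟨0,0,0,0,0,0,0,1⟩

lemma mul_comp (z r : CC k) (hz0 : z.c0 = 0) :
    z * r = ⟨0, z.c1 * r.c0, z.c2 * r.c0, z.c3 * r.c0, z.c4 * r.c0,
      z.c5 * r.c0 + z.c1 * r.c2 + z.c2 * r.c1 + z.c4 * r.c4,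
      z.c6 * r.c0 + z.c1 * r.c3 + z.c3 * r.c1 + z.c4 * r.c4,
      z.c7 * r.c0 + z.c2 * r.c3 + z.c3 * r.c2⟩ := by
  ext <;> simp [CC.mul_def, hz0] <;> ring

lemma annE5 (z : CC k) (hz0 : z.c0 = 0) : z * E5 = 0 := by
  rw [mul_comp _ _ hz0]; ext <;> simp [E5, CC.zero_def]
lemma annE6 (z : CC k) (hz0 : z.c0 = 0) : z * E6 = 0 := by
  rw [mul_comp _ _ hz0]; ext <;> simp [E6, CC.zero_def]
lemma annE7 (z : CC k) (hz0 : z.c0 = 0) : z * E7 = 0 := by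
  rw [mul_comp _ _ hz0]; ext <;> simp [E7, CC.zero_def]

end CC

section FieldPart
variable {k : Type} [Field k]

lemma unitOf (x : CC k) (h : x.c0 ≠ 0) : IsUnit x := by
  refine IsUnit.of_mul_eq_one (a := x)
    ⟨x.c0 ^ 2 / x.c0 ^ 3, -(x.c1 * x.c0) / x.c0 ^ 3, -(x.c2 * x.c0) / x.c0 ^ 3,
      -(x.c3 * x.c0) / x.c0 ^ 3, -(x.c4 * x.c0) / x.c0 ^ 3,
      (-(x.c5 * x.c0) + 2 * x.c1 * x.c2 + x.c4 ^ 2) / x.c0 ^ 3,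
      (-(x.c6 * x.c0) + 2 * x.c1 * x.c3 + x.c4 ^ 2) / x.c0 ^ 3,
      (-(x.c7 * x.c0) + 2 * x.c2 * x.c3) / x.c0 ^ 3⟩ ?_
  ext <;> simp only [CC.mul_def, CC.one_def] <;> field_simp <;> ring

lemma hitOf (z : CC k) (hz0 : z.c0 = 0)
    (h5 : ∃ r, CC.E5 = z * r) (h6 : ∃ r, CC.E6 = z * r) (h7 : ∃ r, CC.E7 = z * r) :
    Hit ![z.c1, z.c2, z.c3, z.c4] := by
  obtain ⟨r5, hr5⟩ := h5
  obtain ⟨r6, hr6⟩ := h6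
  obtain ⟨r7, hr7⟩ := h7
  rw [CC.mul_comp _ _ hz0, CC.E5, CC.mk.injEq] at hr5
  rw [CC.mul_comp _ _ hz0, CC.E6, CC.mk.injEq] at hr6
  rw [CC.mul_comp _ _ hz0, CC.E7, CC.mk.injEq] at hr7
  obtain ⟨-, a1, a2, a3, a4, a5, a6, a7⟩ := hr5
  obtain ⟨-, b1, b2, b3, b4, b5, b6, b7⟩ := hr6
  obtain ⟨-, c1, c2, c3, c4, c5, c6, c7⟩ := hr7
  by_cases hlin : z.c1 = 0 ∧ z.c2 = 0 ∧ z.c3 = 0 ∧ z.c4 = 0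
  · exfalso
    obtain ⟨l1, l2, l3, l4⟩ := hlin
    -- a5 : 1 = z.c5 * r5.c0 + ..., with linear parts zero
    have ha : z.c5 * r5.c0 = 1 := by linear_combination -a5 - r5.c2 * l1 - r5.c1 * l2 - r5.c4 * l4
    have hb : z.c6 * r5.c0 = 0 := by linear_combination -a6 - r5.c3 * l1 - r5.c1 * l3 - r5.c4 * l4
    have hb' : z.c6 * r6.c0 = 1 := by linear_combination -b6 - r6.c3 * l1 - r6.c1 * l3 - r6.c4 * l4
    have hr50 : r5.c0 ≠ 0 := fun h0 => by simp [h0] at ha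
    have hz6 : z.c6 = 0 := by
      rcases mul_eq_zero.mp hb with h | h
      · exact h
      · exact absurd h hr50
    rw [hz6, zero_mul] at hb'
    exact one_ne_zero hb'.symm
  · have hnz : z.c1 ≠ 0 ∨ z.c2 ≠ 0 ∨ z.c3 ≠ 0 ∨ z.c4 ≠ 0 := by tauto
    have r0zero : ∀ r : CC k, 0 = z.c1 * r.c0 → 0 = z.c2 * r.c0 → 0 = z.c3 * r.c0 →
        0 = z.c4 * r.c0 → r.c0 = 0 := by
      intro r e1 e2 e3 e4
      rcases hnz with h | h | h | h
      · exact (mul_eq_zero.mp e1.symm).resolve_left h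
      · exact (mul_eq_zero.mp e2.symm).resolve_left h
      · exact (mul_eq_zero.mp e3.symm).resolve_left h
      · exact (mul_eq_zero.mp e4.symm).resolve_left h
    have ha0 : r5.c0 = 0 := r0zero r5 a1 a2 a3 a4
    have hb0 : r6.c0 = 0 := r0zero r6 b1 b2 b3 b4
    have hc0 : r7.c0 = 0 := r0zero r7 c1 c2 c3 c4
    refine ⟨⟨![r5.c1, r5.c2, r5.c3, r5.c4], ?_⟩, ⟨![r6.c1, r6.c2, r6.c3, r6.c4], ?_⟩,
      ⟨![r7.c1, r7.c2, r7.c3, r7.c4], ?_⟩⟩ <;> funext j <;> fin_cases j <;> simp [Mf]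
    · linear_combination -a5 - z.c5 * ha0
    · linear_combination -a6 - z.c6 * ha0
    · linear_combination -a7 - z.c7 * ha0
    · linear_combination -b5 - z.c5 * hb0
    · linear_combination -b6 - z.c6 * hb0
    · linear_combination -b7 - z.c7 * hb0
    · linear_combination -c5 - z.c5 * hc0
    · linear_combination -c6 - z.c6 * hc0
    · linear_combination -c7 - z.c7 * hc0

lemma noCC (hkey : ¬ ∃ a : Fin 4 → k, Hit a ∧ ∃ b, Mf a b = 0 ∧ Hit b) :
    ∀ z : CC k, ¬ IsExactZeroDivisor (CC k) z := by
  rintro z ⟨hz0, hzu, w, hw1, hw2⟩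
  have hz00 : z.c0 = 0 := by
    by_contra h
    exact hzu (unitOf z h)
  have hwz : w * z = 0 := mem_annIdeal.mp (hw2 ▸ Ideal.mem_span_singleton_self z)
  have hw_ne : w ≠ 0 := by
    rintro rfl
    have h5 : CC.E5 ∈ annIdeal (CC k) z := mem_annIdeal.mpr (CC.annE5 z hz00)
    rw [hw1] at h5
    simp only [Set.singleton_zero, Ideal.span_zero, Ideal.mem_bot] at h5
    have : (CC.E5 : CC k).c5 = (0 : CC k).c5 := by rw [h5]
    simp [CC.E5, CC.zero_def] at this
  have hw00 : w.c0 = 0 := by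
    by_contra h
    have : Ideal.span {w} = ⊤ := Ideal.span_singleton_eq_top.mpr (unitOf w h)
    have h1 : (1 : CC k) ∈ annIdeal (CC k) z := by rw [hw1, this]; trivial
    have := mem_annIdeal.mp h1
    rw [mul_one] at this
    exact hz0 this
  -- E5, E6, E7 lie in both annihilators
  have getw : ∀ E : CC k, z * E = 0 → ∃ r, E = w * r := by
    intro E hE
    have : E ∈ annIdeal (CC k) z := mem_annIdeal.mpr hE
    rw [hw1] at this
    exact Ideal.mem_span_singleton.mp this
  have getz : ∀ E : CC k, w * E = 0 → ∃ r, E = z * r := by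
    intro E hE
    have : E ∈ annIdeal (CC k) w := mem_annIdeal.mpr hE
    rw [hw2] at this
    exact Ideal.mem_span_singleton.mp this
  have hitw : Hit ![w.c1, w.c2, w.c3, w.c4] :=
    hitOf w hw00 (getw _ (CC.annE5 z hz00)) (getw _ (CC.annE6 z hz00))
      (getw _ (CC.annE7 z hz00))
  have hitz : Hit ![z.c1, z.c2, z.c3, z.c4] :=
    hitOf z hz00 (getz _ (CC.annE5 w hw00)) (getz _ (CC.annE6 w hw00))
      (getz _ (CC.annE7 w hw00))
  -- the product relation
  have hprod : Mf ![z.c1, z.c2, z.c3, z.c4] ![w.c1, w.c2, w.c3, w.c4] = 0 := by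
    have h := hwz
    rw [mul_comm, CC.mul_comp _ _ hz00, CC.zero_def, CC.mk.injEq] at h
    obtain ⟨-, -, -, -, -, e5, e6, e7⟩ := h
    funext j
    fin_cases j <;> simp [Mf]
    · linear_combination e5 - z.c5 * hw00
    · linear_combination e6 - z.c6 * hw00
    · linear_combination e7 - z.c7 * hw00
  exact hkey ⟨_, hitz, _, hprod, hitw⟩

end FieldPart

set_option maxHeartbeats 4000000 in
set_option maxRecDepth 100000 in
lemma key2 : ¬ ∃ a : Fin 4 → ZMod 2, Hit a ∧ ∃ b, Mf a b = 0 ∧ Hit b := by decide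

set_option maxHeartbeats 40000000 in
set_option maxRecDepth 400000 in
lemma key3 : ¬ ∃ a : Fin 4 → ZMod 3, Hit a ∧ ∃ b, Mf a b = 0 ∧ Hit b := by decide

/-- for `k = F₂` or `k = F₃`, there are no exact zero divisors in
`R = k[s,t,u,v]/(s², sv, t², tv, u², uv, v² - st - su)`. -/
theorem stmt16 (p : ℕ) (hp : p = 2 ∨ p = 3) :
    ∀ x : R14 (ZMod p), ¬ IsExactZeroDivisor (R14 (ZMod p)) x := by
  rcases hp with rfl | rfl
  · intro x hx
    exact noCC key2 (eqv x) (transfer eqv x hx)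
  · intro x hx
    exact noCC key3 (eqv x) (transfer eqv x hx)
end
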